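/- Let T be a tree on n vertices with oriented edge weights: each edge {u,v} gets weight q on one direction and t on the other; let ED^{q,t}_T be the matrix whose (i,j) entry is the product of the directed weights along the path from i to j (diagonal entries 1). Then det(ED^{q,t}_T) = (1 - qt)^{n-1}. -/

import Mathlib

open MvPolynomial

open SimpleGraph

variable {V : Type*} [DecidableEq V] {G : SimpleGraph V}

lemma dist_split_of_mem_support {u v x : V} {p : G.Walk u v} (hx : x ∈ p.support) :
    G.dist u x + G.dist x v ≤ p.length := by
  calc G.dist u x + G.dist x v
      ≤ (p.takeUntil x hx).length + (p.dropUntil x hx).length :=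
        add_le_add (SimpleGraph.dist_le _) (SimpleGraph.dist_le _)
    _ = p.length := by rw [← SimpleGraph.Walk.length_append, p.take_spec hx]

lemma exists_adj_dist (hc : G.Connected) {a b : V} (hab : a ≠ b) :
    ∃ m, G.Adj m b ∧ G.dist a m + 1 = G.dist a b := by
  obtain ⟨p, hp⟩ := hc.exists_walk_length_eq_dist a b
  cases hrev : p.reverse with
  | nil =>
      exact absurd rfl hab
  | cons h q =>
      rename_i m
      refine ⟨m, h.symm, ?_⟩
      have hlen : q.length + 1 = G.dist a b := by
        have := congrArg SimpleGraph.Walk.length hrev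
        simpa [hp] using this.symm
      have h1 : G.dist a m ≤ q.length := by
        simpa using SimpleGraph.dist_le q.reverse
      have h2 : G.dist a b ≤ G.dist a m + 1 := by
        have := hc.dist_triangle (u := a) (v := m) (w := b)
        have hmb : G.dist m b = 1 := SimpleGraph.dist_eq_one_iff_adj.mpr h.symm
        omega
      omega

lemma tree_adj_dist_ne (hG : G.IsTree) (r : V) {a b : V} (hab : G.Adj a b) :
    G.dist r a ≠ G.dist r b := by
  intro h
  have hc := hG.isConnected
  obtain ⟨π, hπp, hπl⟩ := (hc a r).exists_path_of_dist
  by_cases hb : b ∈ π.support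
  · have hsplit := dist_split_of_mem_support (G := G) hb
    have h1 : G.dist a b = 1 := SimpleGraph.dist_eq_one_iff_adj.mpr hab
    have h2 : G.dist b r = G.dist a r := by rw [SimpleGraph.dist_comm, ← h, SimpleGraph.dist_comm]
    omega
  · obtain ⟨τ, hτp, hτl⟩ := (hc b r).exists_path_of_dist
    have hσ : (SimpleGraph.Walk.cons hab.symm π).IsPath :=
      (SimpleGraph.Walk.cons_isPath_iff _ _).mpr ⟨hπp, hb⟩
    have := (hG.existsUnique_path b r).unique hσ hτp
    have hlen := congrArg SimpleGraph.Walk.length this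
    simp only [SimpleGraph.Walk.length_cons] at hlen
    rw [hπl, hτl] at hlen
    have h2 : G.dist b r = G.dist a r := by rw [SimpleGraph.dist_comm, ← h, SimpleGraph.dist_comm]
    omega

lemma tree_adj_dist_dichotomy (hG : G.IsTree) (r : V) {a b : V} (hab : G.Adj a b) :
    G.dist r b = G.dist r a + 1 ∨ G.dist r a = G.dist r b + 1 := by
  have hc := hG.isConnected
  have h1 : G.dist a b = 1 := SimpleGraph.dist_eq_one_iff_adj.mpr hab
  have h2 : G.dist b a = 1 := SimpleGraph.dist_eq_one_iff_adj.mpr hab.symm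
  have t1 := hc.dist_triangle (u := r) (v := a) (w := b)
  have t2 := hc.dist_triangle (u := r) (v := b) (w := a)
  have hne := tree_adj_dist_ne hG r hab
  omega

lemma cut_lemma (hG : G.IsTree) {P k x y : V} (hPk : G.Adj P k)
    (hx : G.dist P x = G.dist k x + 1) (hy : G.dist k y = G.dist P y + 1) :
    G.dist x y = G.dist x k + G.dist k y := by
  classical
  have hc := hG.isConnected
  have hbridge : ¬ (G \ fromEdgeSet {s(P, k)}).Reachable P k :=
    ((SimpleGraph.isBridge_iff).mp
      (SimpleGraph.isAcyclic_iff_forall_adj_isBridge.mp hG.IsAcyclic hPk))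
  set G' : SimpleGraph V := G \ fromEdgeSet {s(P, k)} with hG'
  have hdel : G.deleteEdges {s(P, k)} = G' := rfl
  have hPk1 : G.dist k P = 1 := SimpleGraph.dist_eq_one_iff_adj.mpr hPk.symm
  have hPk1' : G.dist P k = 1 := SimpleGraph.dist_eq_one_iff_adj.mpr hPk
  -- k reaches x in G'
  have hkx : G'.Reachable k x := by
    obtain ⟨p, hp⟩ := hc.exists_walk_length_eq_dist k x
    have hPnot : P ∉ p.support := by
      intro hmem
      have := dist_split_of_mem_support (G := G) hmem
      have hPx := hc.dist_triangle (u := k) (v := P) (w := x)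
      omega
    have hedges : ∀ e ∈ p.edges, e ∉ ({s(P, k)} : Set (Sym2 V)) := by
      intro e he hmem
      rw [Set.mem_singleton_iff] at hmem
      subst hmem
      exact hPnot (p.fst_mem_support_of_mem_edges he)
    rw [← hdel]
    exact ⟨p.toDeleteEdges _ hedges⟩
  -- P reaches y in G'
  have hPy : G'.Reachable P y := by
    obtain ⟨p, hp⟩ := hc.exists_walk_length_eq_dist P y
    have hknot : k ∉ p.support := by
      intro hmem
      have := dist_split_of_mem_support (G := G) hmem
      omega
    have hedges : ∀ e ∈ p.edges, e ∉ ({s(P, k)} : Set (Sym2 V)) := by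
      intro e he hmem
      rw [Set.mem_singleton_iff] at hmem
      subst hmem
      exact hknot (p.snd_mem_support_of_mem_edges he)
    rw [← hdel]
    exact ⟨p.toDeleteEdges _ hedges⟩
  -- x does not reach y in G'
  have hxy : ¬ G'.Reachable x y := fun h => hbridge (((hkx.trans h).trans hPy.symm).symm)
  -- shortest path x to y must contain k
  obtain ⟨σ, hσ⟩ := hc.exists_walk_length_eq_dist x y
  have hkmem : k ∈ σ.support := by
    by_contra hk
    apply hxy
    have hedges : ∀ e ∈ σ.edges, e ∉ ({s(P, k)} : Set (Sym2 V)) := by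
      intro e he hmem
      rw [Set.mem_singleton_iff] at hmem
      subst hmem
      exact hk (σ.snd_mem_support_of_mem_edges he)
    rw [← hdel]
    exact ⟨σ.toDeleteEdges _ hedges⟩
  have h1 := dist_split_of_mem_support (G := G) hkmem
  have h2 := hc.dist_triangle (u := x) (v := k) (w := y)
  omega

lemma prefix_step {R : Type*} [CommRing R] (hc : G.Connected)
    (w : V → V → R) (E : Matrix V V R)
    (hdiag : ∀ i, E i i = 1)
    (hstep : ∀ i j k, G.Adj j k → G.dist i k = G.dist i j + 1 → E i k = E i j * w j k) :
    ∀ (d : ℕ) (i k j : V), G.Adj i k → G.dist k j = d → G.dist i j = d + 1 →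
      E i j = w i k * E k j := by
  intro d
  induction d with
  | zero =>
      intro i k j hik h0 h1
      have hkj : k = j := (hc.dist_eq_zero_iff).mp h0
      subst hkj
      rw [hdiag, mul_one]
      have := hstep i i k hik (by simpa [SimpleGraph.dist_self] using h1.trans rfl)
      rw [this, hdiag, one_mul]
  | succ d ih =>
      intro i k j hik hkj hij
      have hkj' : k ≠ j := by
        intro h; subst h; simp [SimpleGraph.dist_self] at hkj
      obtain ⟨m, hmj, hm⟩ := exists_adj_dist hc hkj'
      rw [hkj] at hm
      have hdistim : G.dist i m = d + 1 := by
        have h1 : G.dist i m ≤ G.dist i k + G.dist k m := hc.dist_triangle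
        have h2 : G.dist i j ≤ G.dist i m + G.dist m j := hc.dist_triangle
        have h3 : G.dist m j = 1 := SimpleGraph.dist_eq_one_iff_adj.mpr hmj
        have h4 : G.dist i k = 1 := SimpleGraph.dist_eq_one_iff_adj.mpr hik
        omega
      have e1 : E i j = E i m * w m j := hstep i m j hmj (by omega)
      have e2 : E k j = E k m * w m j := hstep k m j hmj (by omega)
      have e3 : E i m = w i k * E k m := ih i k m hik (by omega) hdistim
      rw [e1, e2, e3]
      ring

open Matrix in
lemma det_eq_one_of_lowerTri {n : ℕ} {R : Type*} [CommRing R] (M : Matrix (Fin n) (Fin n) R)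
    (b : Fin n → ℕ) (hdiag : ∀ i, M i i = 1)
    (hoff : ∀ i j, i ≠ j → b i ≤ b j → M i j = 0) : M.det = 1 := by
  classical
  rw [← Matrix.det_transpose]
  have hbt : Mᵀ.BlockTriangular b := by
    intro i j hij
    exact hoff j i (fun h => by subst h; omega) (le_of_lt hij)
  rw [hbt.det]
  refine Finset.prod_eq_one fun a _ => ?_
  have : Mᵀ.toSquareBlock b a = 1 := by
    ext ⟨i, hi⟩ ⟨j, hj⟩
    by_cases hij : i = j
    · subst hij
      simp [Matrix.toSquareBlock, Matrix.toSquareBlockProp, Matrix.one_apply, hdiag i]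
    · simp [Matrix.toSquareBlock, Matrix.toSquareBlockProp, Matrix.one_apply, hij,
        Subtype.ext_iff, hoff j i (Ne.symm hij) (le_of_eq (hj.trans hi.symm))]
  rw [this, Matrix.det_one]


/-- For a tree `T` on `n` vertices with each edge carrying weight `q = X 0` in
one direction and `t = X 1` in the other (the assignment `w`), and `E` the
`q,t`-exponential distance matrix (diagonal `1`, `(i,j)` entry the product of
directed arc weights along the path from `i` to `j`, characterized by the
recursion along paths), `det E = (1 - qt)^(n-1)`. -/
theorem det_qt_expDist {n : ℕ} (G : SimpleGraph (Fin n)) [DecidableRel G.Adj]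
    (hG : G.IsTree)
    (w : Fin n → Fin n → MvPolynomial (Fin 2) ℤ)
    (hw : ∀ u v, G.Adj u v →
      (w u v = X 0 ∧ w v u = X 1) ∨ (w u v = X 1 ∧ w v u = X 0))
    (E : Matrix (Fin n) (Fin n) (MvPolynomial (Fin 2) ℤ))
    (hdiag : ∀ i, E i i = 1)
    (hstep : ∀ i j k, G.Adj j k → G.dist i k = G.dist i j + 1 →
      E i k = E i j * w j k) :
    E.det = (1 - X 0 * X 1) ^ (n - 1) := by
  classical
  have hc := hG.isConnected
  obtain ⟨r⟩ : Nonempty (Fin n) := hc.nonempty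
  -- parent function
  have hpar : ∀ k : Fin n, k ≠ r → ∃ m, G.Adj m k ∧ G.dist r m + 1 = G.dist r k :=
    fun k hk => exists_adj_dist hc (Ne.symm hk)
  choose pf hpf1 hpf2 using hpar
  set p : Fin n → Fin n := fun k => if h : k = r then r else pf k h with hpdef
  have hpadj : ∀ k, k ≠ r → G.Adj (p k) k := by
    intro k hk; simp only [hpdef, dif_neg hk]; exact hpf1 k hk
  have hpdist : ∀ k, k ≠ r → G.dist r (p k) + 1 = G.dist r k := by
    intro k hk; simp only [hpdef, dif_neg hk]; exact hpf2 k hk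
  have hrout : ∀ k, k ≠ r → G.dist k r = G.dist (p k) r + 1 := by
    intro k hk
    have h0 := hpdist k hk
    have e1 : G.dist k r = G.dist r k := SimpleGraph.dist_comm
    have e2 : G.dist (p k) r = G.dist r (p k) := SimpleGraph.dist_comm
    omega
  have hqt : ∀ u v, G.Adj u v → w u v * w v u = X 0 * X 1 := by
    intro u v huv
    rcases hw u v huv with ⟨h1, h2⟩ | ⟨h1, h2⟩ <;> rw [h1, h2] <;> ring
  have hpre : ∀ i k j, G.Adj i k → G.dist i j = G.dist k j + 1 → E i j = w i k * E k j :=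
    fun i k j hik hd => prefix_step hc w E hdiag hstep (G.dist k j) i k j hik rfl hd
  have hside : ∀ a b j, G.Adj a b →
      G.dist a j = G.dist b j + 1 ∨ G.dist b j = G.dist a j + 1 := by
    intro a b j hab
    have h := tree_adj_dist_dichotomy hG j hab
    have e1 : G.dist j a = G.dist a j := SimpleGraph.dist_comm
    have e2 : G.dist j b = G.dist b j := SimpleGraph.dist_comm
    omega
  -- the row and column operation matrices
  set B : Matrix (Fin n) (Fin n) (MvPolynomial (Fin 2) ℤ) :=
    fun k x => (if x = k then 1 else 0) +
      (if k = r then 0 else if x = p k then -(w k (p k)) else 0) with hBdef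
  set C : Matrix (Fin n) (Fin n) (MvPolynomial (Fin 2) ℤ) :=
    fun y j => (if y = j then 1 else 0) +
      (if j = r then 0 else if y = p j then -(w (p j) j) else 0) with hCdef
  have hF : ∀ k j, (B * E) k j =
      E k j + (if k = r then 0 else -(w k (p k) * E (p k) j)) := by
    intro k j
    rw [Matrix.mul_apply]
    by_cases hk : k = r
    · simp [hBdef, hk, add_mul, ite_mul, Finset.sum_ite_eq']
    · simp [hBdef, hk, add_mul, ite_mul, Finset.sum_add_distrib, Finset.sum_ite_eq',
        neg_mul]
  have hFC : ∀ i j, (B * E * C) i j =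
      (B * E) i j + (if j = r then 0 else -((B * E) i (p j) * w (p j) j)) := by
    intro i j
    rw [Matrix.mul_apply]
    by_cases hj : j = r
    · simp [hCdef, hj, mul_add, mul_ite, Finset.sum_ite_eq]
    · simp [hCdef, hj, mul_add, mul_ite, Finset.sum_add_distrib, Finset.sum_ite_eq,
        mul_neg]
  have hFr : ∀ j, (B * E) r j = E r j := by intro j; rw [hF]; simp
  have hFout : ∀ k j, k ≠ r → G.dist k j = G.dist (p k) j + 1 → (B * E) k j = 0 := by
    intro k j hk hd
    have he : E k j = w k (p k) * E (p k) j := hpre k (p k) j (hpadj k hk).symm hd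
    rw [hF, if_neg hk, he]; ring
  have hFin : ∀ k j, k ≠ r → G.dist (p k) j = G.dist k j + 1 →
      (B * E) k j = (1 - X 0 * X 1) * E k j := by
    intro k j hk hd
    have he : E (p k) j = w (p k) k * E k j := hpre (p k) k j (hpadj k hk) hd
    have hq := hqt k (p k) (hpadj k hk).symm
    rw [hF, if_neg hk, he]
    linear_combination (-(E k j)) * hq
  -- distances to self/adjacent, used repeatedly
  have hdistadj : ∀ a b : Fin n, G.Adj a b → G.dist a b = 1 :=
    fun a b hab => SimpleGraph.dist_eq_one_iff_adj.mpr hab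
  have hdzero : ∀ a b : Fin n, G.dist a b = 0 → a = b := fun a b h => hc.dist_eq_zero_iff.mp h
  have hdiagmat : B * E * C =
      Matrix.diagonal (fun i => if i = r then 1 else (1 - X 0 * X 1)) := by
    refine Matrix.ext fun i j => ?_
    rw [hFC]
    by_cases hj : j = r
    · rw [if_pos hj, add_zero, hj]
      by_cases hi : i = r
      · rw [hi, hFr, hdiag, Matrix.diagonal_apply_eq, if_pos rfl]
      · rw [Matrix.diagonal_apply_ne _ hi]
        exact hFout i r hi (hrout i hi)
    · rw [if_neg hj]
      by_cases hij : i = j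
      · subst hij
        rw [Matrix.diagonal_apply_eq, if_neg hj]
        have h1 : (B * E) i i = (1 - X 0 * X 1) * E i i := by
          refine hFin i i hj ?_
          rw [hdistadj _ _ (hpadj i hj), SimpleGraph.dist_self]
        have h2 : (B * E) i (p i) = 0 := by
          refine hFout i (p i) hj ?_
          rw [hdistadj _ _ (hpadj i hj).symm, SimpleGraph.dist_self]
        rw [h1, h2, hdiag]; ring
      · rw [Matrix.diagonal_apply_ne _ hij]
        by_cases hi : i = r
        · rw [hi, hFr, hFr]
          have he : E r j = E r (p j) * w (p j) j :=
            hstep r (p j) j (hpadj j hj) (by have := hpdist j hj; omega)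
          rw [he]; ring
        · -- i ≠ r, j ≠ r, i ≠ j
          rcases hside (p i) i j (hpadj i hi) with hin | hout
          · -- j on i's side of the edge (p i, i)
            have hKLj : G.dist j r = G.dist j i + G.dist i r :=
              cut_lemma hG (hpadj i hi) hin (hrout i hi)
            have hpjin : G.dist (p i) (p j) = G.dist i (p j) + 1 := by
              rcases hside (p i) i (p j) (hpadj i hi) with h' | h'
              · exact h'
              · -- p j on the other side: contradiction
                exfalso
                have hcut : G.dist j (p j) = G.dist j i + G.dist i (p j) :=
                  cut_lemma hG (hpadj i hi) hin h'
                have h1 : G.dist j (p j) = 1 := hdistadj _ _ (hpadj j hj).symm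
                have h2 : G.dist i j ≠ 0 := fun h0 => hij (hdzero i j h0)
                have e1 : G.dist j i = G.dist i j := SimpleGraph.dist_comm
                omega
            have hA : G.dist i j = G.dist i (p j) + 1 := by
              rcases hside (p j) j i (hpadj j hj) with h' | h'
              · -- wrong direction: contradiction
                exfalso
                have hKLpj : G.dist (p j) r = G.dist (p j) i + G.dist i r :=
                  cut_lemma hG (hpadj i hi) hpjin (hrout i hi)
                have hparj := hpdist j hj
                have e1 : G.dist (p j) r = G.dist r (p j) := SimpleGraph.dist_comm
                have e2 : G.dist j r = G.dist r j := SimpleGraph.dist_comm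
                have e3 : G.dist j i = G.dist i j := SimpleGraph.dist_comm
                have e4 : G.dist (p j) i = G.dist i (p j) := SimpleGraph.dist_comm
                omega
              · have e3 : G.dist j i = G.dist i j := SimpleGraph.dist_comm
                have e4 : G.dist (p j) i = G.dist i (p j) := SimpleGraph.dist_comm
                omega
            have h1 : (B * E) i j = (1 - X 0 * X 1) * E i j := hFin i j hi hin
            have h2 : (B * E) i (p j) = (1 - X 0 * X 1) * E i (p j) := hFin i (p j) hi hpjin
            have he : E i j = E i (p j) * w (p j) j := hstep i (p j) j (hpadj j hj) hA
            rw [h1, h2, he]; ring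
          · -- j on the other side of the edge (p i, i)
            have h1 : (B * E) i j = 0 := hFout i j hi hout
            have hpjout : G.dist i (p j) = G.dist (p i) (p j) + 1 := by
              rcases hside (p i) i (p j) (hpadj i hi) with h' | h'
              · -- p j on i's side: contradiction
                exfalso
                have hcut : G.dist (p j) j = G.dist (p j) i + G.dist i j :=
                  cut_lemma hG (hpadj i hi) h' hout
                have hd1 : G.dist (p j) j = 1 := hdistadj _ _ (hpadj j hj)
                have hd2 : G.dist i j ≠ 0 := fun h0 => hij (hdzero i j h0)
                have hd3 : G.dist (p j) i = 0 := by omega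
                have hd4 : G.dist i j = 1 := by omega
                have he1 : p j = i := hdzero _ _ hd3
                have he2 : G.dist (p i) j = 0 := by
                  have e5 : G.dist j i = G.dist i j := SimpleGraph.dist_comm
                  omega
                have he3 : p i = j := hdzero _ _ he2
                have hq1 := hpdist j hj
                have hq2 := hpdist i hi
                rw [he1] at hq1
                rw [he3] at hq2
                omega
              · exact h'
            have h2 : (B * E) i (p j) = 0 := hFout i (p j) hi hpjout
            rw [h1, h2]; ring
  -- determinants of B and C
  have hb : ∀ k, k ≠ r → G.dist r (p k) < G.dist r k := by
    intro k hk; have := hpdist k hk; omega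
  have hdetB : B.det = 1 := by
    refine det_eq_one_of_lowerTri B (fun k => G.dist r k) ?_ ?_
    · intro i
      by_cases hi : i = r
      · simp [hBdef, hi]
      · have h2 : i ≠ p i := Ne.symm (hpadj i hi).ne
        simp [hBdef, hi, h2]
    · intro i j hij hle
      by_cases hi : i = r
      · subst hi
        simp [hBdef, Ne.symm hij]
      · by_cases hji : j = p i
        · subst hji
          have hle' : G.dist r i ≤ G.dist r (p i) := hle
          have := hb i hi
          omega
        · simp [hBdef, hi, Ne.symm hij, hji]
  have hdetC : C.det = 1 := by
    rw [← Matrix.det_transpose]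
    refine det_eq_one_of_lowerTri C.transpose (fun k => G.dist r k) ?_ ?_
    · intro i
      by_cases hi : i = r
      · simp only [Matrix.transpose_apply]; simp [hCdef, Matrix.transpose_apply, hi]
      · have h2 : i ≠ p i := Ne.symm (hpadj i hi).ne
        simp only [Matrix.transpose_apply]; simp [hCdef, Matrix.transpose_apply, hi, h2]
    · intro i j hij hle
      by_cases hi : i = r
      · subst hi
        simp only [Matrix.transpose_apply]; simp [hCdef, Matrix.transpose_apply, Ne.symm hij]
      · by_cases hji : j = p i
        · subst hji
          have hle' : G.dist r i ≤ G.dist r (p i) := hle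
          have := hb i hi
          omega
        · simp only [Matrix.transpose_apply]; simp [hCdef, Matrix.transpose_apply, hi, Ne.symm hij, hji]
  -- conclude
  have hdetmul := congrArg Matrix.det hdiagmat
  rw [Matrix.det_mul, Matrix.det_mul, hdetB, hdetC, one_mul, mul_one,
    Matrix.det_diagonal] at hdetmul
  rw [hdetmul, ← Finset.mul_prod_erase Finset.univ _ (Finset.mem_univ r), if_pos rfl, one_mul,
    Finset.prod_congr rfl (fun i hi => if_neg (Finset.ne_of_mem_erase hi)),
    Finset.prod_const, Finset.card_erase_of_mem (Finset.mem_univ r), Finset.card_fin]
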